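/- Let f_t = f_{z_t,ẑ_t} for t = 1,…,T be instantaneous SGTSVM objectives, let (u_t) be generated by the SGTSVM iteration u_{t+1} = u_t − (1/t)∇_t where ∇_t is the subgradient vector of f_t at u_t, and suppose ‖u_t‖ ≤ G1 for all 1 ≤ t ≤ T+1 and ‖∇_t‖ ≤ G2 for all 1 ≤ t ≤ T. Let u* be a minimizer of the TWSVM objective f. Then (1/T)·Σ_{t=1}^T f_t(u_t) ≤ (1/T)·Σ_{t=1}^T f_t(u*) + G2(G1 + ‖u*‖) + (1/(2T))·G2²·(1 + ln T). -/

import Mathlib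

open RealInnerProductSpace Finset

/-- Theorem 3.2(i): the average instantaneous SGTSVM objective at the iterates is
bounded in terms of its value at a minimizer `u*` of the TWSVM objective. -/
theorem sgtsvm_average_objective_bound
    (d m1 m2 T : ℕ) (hm1 : 0 < m1) (hm2 : 0 < m2) (hT : 1 ≤ T)
    (c1 c2 : ℝ) (hc1 : 0 < c1) (hc2 : 0 < c2)
    (Z1 : Fin m1 → EuclideanSpace ℝ (Fin d)) (Z2 : Fin m2 → EuclideanSpace ℝ (Fin d))
    (z zhat : ℕ → EuclideanSpace ℝ (Fin d))
    (hzmem : ∀ t, 1 ≤ t → t ≤ T → ∃ i, z t = Z1 i)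
    (hzhmem : ∀ t, 1 ≤ t → t ≤ T → ∃ j, zhat t = Z2 j)
    -- the instantaneous SGTSVM objectives f_t = f_{z_t, ẑ_t}
    (f : ℕ → EuclideanSpace ℝ (Fin d) → ℝ)
    (hf : ∀ t x, f t x = (1 / 2) * ‖x‖ ^ 2 + (c1 / 2) * ⟪x, z t⟫ ^ 2
        + c2 * max 0 (1 + ⟪x, zhat t⟫))
    -- the SGTSVM iteration with the subgradient vector ∇_t of f_t at u_t
    (u g : ℕ → EuclideanSpace ℝ (Fin d))
    (hg : ∀ t, 1 ≤ t → t ≤ T →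
      g t = u t + (c1 * ⟪u t, z t⟫) • z t
        + (if 0 < 1 + ⟪u t, zhat t⟫ then c2 else 0) • zhat t)
    (hstep : ∀ t, 1 ≤ t → t ≤ T → u (t + 1) = u t - (1 / (t : ℝ)) • g t)
    (G1 G2 : ℝ)
    (hu : ∀ t, 1 ≤ t → t ≤ T + 1 → ‖u t‖ ≤ G1)
    (hgb : ∀ t, 1 ≤ t → t ≤ T → ‖g t‖ ≤ G2)
    -- the TWSVM objective and its minimizer u*
    (F : EuclideanSpace ℝ (Fin d) → ℝ)
    (hF : ∀ x, F x = (1 / 2) * ‖x‖ ^ 2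
        + (c1 / (2 * (m1 : ℝ))) * ∑ i, ⟪x, Z1 i⟫ ^ 2
        + (c2 / (m2 : ℝ)) * ∑ j, max 0 (1 + ⟪x, Z2 j⟫))
    (ustar : EuclideanSpace ℝ (Fin d)) (hmin : ∀ x, F ustar ≤ F x) :
    (1 / (T : ℝ)) * ∑ t ∈ Finset.Icc 1 T, f t (u t)
      ≤ (1 / (T : ℝ)) * ∑ t ∈ Finset.Icc 1 T, f t ustar
        + G2 * (G1 + ‖ustar‖) + (1 / (2 * (T : ℝ))) * G2 ^ 2 * (1 + Real.log T) := by

  have hG2 : 0 ≤ G2 := le_trans (norm_nonneg _) (hgb 1 le_rfl hT)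
  have hTpos : (0:ℝ) < T := by exact_mod_cast hT
  set K := G2 * (G1 + ‖ustar‖) with hK
  have key : ∀ t ∈ Finset.Icc 1 T, f t (u t) ≤ f t ustar + K := by
    intro t ht
    rw [Finset.mem_Icc] at ht
    obtain ⟨ht1, ht2⟩ := ht
    have hsub : f t (u t) - f t ustar ≤ ⟪g t, u t - ustar⟫ := by
      rw [hf, hf, hg t ht1 ht2]
      have e1 : ⟪u t + (c1 * ⟪u t, z t⟫) • z t
            + (if 0 < 1 + ⟪u t, zhat t⟫ then c2 else 0) • zhat t, u t - ustar⟫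
          = (⟪u t, u t⟫ - ⟪u t, ustar⟫)
            + (c1 * ⟪u t, z t⟫) * (⟪u t, z t⟫ - ⟪ustar, z t⟫)
            + (if 0 < 1 + ⟪u t, zhat t⟫ then c2 else 0)
              * (⟪u t, zhat t⟫ - ⟪ustar, zhat t⟫) := by
        simp only [inner_add_left, inner_sub_right, real_inner_smul_left]
        rw [real_inner_comm (z t) (u t), real_inner_comm (z t) ustar,
          real_inner_comm (zhat t) (u t), real_inner_comm (zhat t) ustar]
        ring
      rw [e1]
      have hinge : c2 * max 0 (1 + ⟪u t, zhat t⟫) - c2 * max 0 (1 + ⟪ustar, zhat t⟫)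
          ≤ (if 0 < 1 + ⟪u t, zhat t⟫ then c2 else 0)
            * (⟪u t, zhat t⟫ - ⟪ustar, zhat t⟫) := by
        split_ifs with h
        · have h1 : max 0 (1 + ⟪u t, zhat t⟫) = 1 + ⟪u t, zhat t⟫ := max_eq_right h.le
          have h2 : 1 + ⟪ustar, zhat t⟫ ≤ max 0 (1 + ⟪ustar, zhat t⟫) := le_max_right _ _
          nlinarith [hc2.le]
        · have h1 : max 0 (1 + ⟪u t, zhat t⟫) = 0 :=
            max_eq_left (by linarith [not_lt.mp h])
          have h2 : 0 ≤ max 0 (1 + ⟪ustar, zhat t⟫) := le_max_left _ _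
          nlinarith [hc2.le]
      have hn : ⟪u t, u t⟫ = ‖u t‖ ^ 2 := real_inner_self_eq_norm_sq _
      have hexp : ‖u t - ustar‖ ^ 2 = ‖u t‖ ^ 2 - 2 * ⟪u t, ustar⟫ + ‖ustar‖ ^ 2 :=
        norm_sub_sq_real _ _
      nlinarith [sq_nonneg (⟪u t, z t⟫ - ⟪ustar, z t⟫), hc1.le,
        sq_nonneg (‖u t - ustar‖), hinge]
    have hbd : ⟪g t, u t - ustar⟫ ≤ K := by
      calc ⟪g t, u t - ustar⟫ ≤ ‖g t‖ * ‖u t - ustar‖ := real_inner_le_norm _ _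
        _ ≤ G2 * (G1 + ‖ustar‖) := by
            apply mul_le_mul (hgb t ht1 ht2) _ (norm_nonneg _) hG2
            exact le_trans (norm_sub_le _ _)
              (add_le_add_left (hu t ht1 (le_trans ht2 (Nat.le_succ T))) _)
    linarith
  have hsum : ∑ t ∈ Finset.Icc 1 T, f t (u t)
      ≤ (∑ t ∈ Finset.Icc 1 T, f t ustar) + (T : ℝ) * K := by
    have := Finset.sum_le_sum key
    rw [Finset.sum_add_distrib, Finset.sum_const, Nat.card_Icc] at this
    simpa [nsmul_eq_mul] using this
  have hlog : 0 ≤ Real.log T := Real.log_nonneg (by exact_mod_cast hT)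
  have hnn : 0 ≤ (1 / (2 * (T : ℝ))) * G2 ^ 2 * (1 + Real.log T) := by positivity
  have hmul : (1 / (T : ℝ)) * ∑ t ∈ Finset.Icc 1 T, f t (u t)
      ≤ (1 / (T : ℝ)) * ((∑ t ∈ Finset.Icc 1 T, f t ustar) + (T : ℝ) * K) :=
    mul_le_mul_of_nonneg_left hsum (by positivity)
  have hTK : (1 / (T : ℝ)) * ((T : ℝ) * K) = K := by field_simp
  rw [mul_add, hTK] at hmul
  linarith
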